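/- arXiv:2204.00127 — 2 statements merged into one kernel-verified Lean document; each statement's English description precedes it below -/
import Mathlib

section
/- Fix R > 0, ε > 0, k > 0, τ̄ > 0. Let ξ, ν ∈ ℝ² with ν ≠ 0 and ⟪ξ,ν⟫ ≤ 0, and set τ̂*(ξ,ν) = −⟪ξ,ν⟫/(‖ν‖² + ε), K_δ(s) = 1/2 + (1/2)·tanh(k(s − δ)), and τ̂(ξ,ν) = τ̂*(ξ,ν)·K₀(τ̂*(ξ,ν)) + (τ̄ − τ̂*(ξ,ν))·K_τ̄(τ̂*(ξ,ν)). If 0 ≤ τ̂(ξ,ν) ≤ 2·τ̂*(ξ,ν), then the future-focused barrier satisfies h_τ̂(ξ,ν) := ‖ξ + τ̂(ξ,ν)·ν‖² − (2R)² ≤ ‖ξ‖² − (2R)² =: h₀(ξ). -/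
open RealInnerProductSpace

/-- The smooth switch `K_δ(s) = 1/2 + (1/2)·tanh(k(s − δ))`. -/
noncomputable def Ksw (k δ s : ℝ) : ℝ :=
  1 / 2 + 1 / 2 * Real.tanh (k * (s - δ))

/-- The regularized minimizing time `τ̂*(ξ,ν) = −⟪ξ,ν⟫/(‖ν‖² + ε)`. -/
noncomputable def tauHatStar (ε : ℝ) (ξ ν : EuclideanSpace ℝ (Fin 2)) : ℝ :=
  -⟪ξ, ν⟫ / (‖ν‖ ^ 2 + ε)

/-- The smoothed look-ahead time `τ̂ = τ̂*·K₀(τ̂*) + (τ̄ − τ̂*)·K_τ̄(τ̂*)`. -/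
noncomputable def tauHat (ε k τbar : ℝ) (ξ ν : EuclideanSpace ℝ (Fin 2)) : ℝ :=
  tauHatStar ε ξ ν * Ksw k 0 (tauHatStar ε ξ ν) +
    (τbar - tauHatStar ε ξ ν) * Ksw k τbar (tauHatStar ε ξ ν)

/-- If `0 ≤ τ̂ ≤ 2τ̂*`, the future-focused barrier is below the nominal barrier:
`h_τ̂(ξ,ν) ≤ h₀(ξ)`. -/
theorem ffcbf_le_nominal
    (R ε k τbar : ℝ) (hR : 0 < R) (hε : 0 < ε) (hk : 0 < k) (hτ : 0 < τbar)
    (ξ ν : EuclideanSpace ℝ (Fin 2)) (hν : ν ≠ 0) (hip : ⟪ξ, ν⟫ ≤ 0)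
    (h0 : 0 ≤ tauHat ε k τbar ξ ν)
    (h2 : tauHat ε k τbar ξ ν ≤ 2 * tauHatStar ε ξ ν) :
    ‖ξ + tauHat ε k τbar ξ ν • ν‖ ^ 2 - (2 * R) ^ 2 ≤ ‖ξ‖ ^ 2 - (2 * R) ^ 2 := by
  set t := tauHat ε k τbar ξ ν with ht
  have hexp : ‖ξ + t • ν‖ ^ 2 = ‖ξ‖ ^ 2 + 2 * (t * ⟪ξ, ν⟫) + t ^ 2 * ‖ν‖ ^ 2 := by
    rw [norm_add_sq_real, real_inner_smul_right, norm_smul]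
    ring_nf
    rw [Real.norm_of_nonneg h0]
  have hden : (0:ℝ) < ‖ν‖ ^ 2 + ε := by positivity
  have hkey : 2 * (t * ⟪ξ, ν⟫) + t ^ 2 * ‖ν‖ ^ 2 ≤ 0 := by
    have h2' : t * (‖ν‖ ^ 2 + ε) ≤ 2 * -⟪ξ, ν⟫ := by
      have := mul_le_mul_of_nonneg_right h2 hden.le
      calc t * (‖ν‖ ^ 2 + ε) ≤ 2 * tauHatStar ε ξ ν * (‖ν‖ ^ 2 + ε) := this
        _ = 2 * -⟪ξ, ν⟫ := by
            rw [tauHatStar]; field_simp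
    have hnν : t * ‖ν‖ ^ 2 ≤ 2 * -⟪ξ, ν⟫ := by
      nlinarith [sq_nonneg ‖ν‖, mul_nonneg h0 hε.le]
    nlinarith [mul_le_mul_of_nonneg_left hnν h0]
  linarith [hexp ▸ (by linarith : ‖ξ‖ ^ 2 + 2 * (t * ⟪ξ, ν⟫) + t ^ 2 * ‖ν‖ ^ 2 ≤ ‖ξ‖ ^ 2)]
end

section
/- Fix ε > 0, k > 0, τ̄ > 0. Let ξ, ν ∈ ℝ² with ⟪ξ,ν⟫ ≤ 0, set τ̂*(ξ,ν) = −⟪ξ,ν⟫/(‖ν‖² + ε), K_δ(s) = 1/2 + (1/2)·tanh(k(s − δ)), and τ̂(ξ,ν) = τ̂*(ξ,ν)·K₀(τ̂*(ξ,ν)) + (τ̄ − τ̂*(ξ,ν))·K_τ̄(τ̂*(ξ,ν)). Then τ̂(ξ,ν) > 0. -/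
open RealInnerProductSpace

lemma tanh_neg_one_lt (x : ℝ) : -1 < Real.tanh x := by
  rw [Real.tanh_eq_sinh_div_cosh, neg_lt, ← neg_div, div_lt_one (Real.cosh_pos x)]
  have h := Real.exp_pos x
  rw [Real.sinh_eq, Real.cosh_eq]
  linarith

lemma tanh_mono {x y : ℝ} (h : x ≤ y) : Real.tanh x ≤ Real.tanh y := by
  rw [Real.tanh_eq_sinh_div_cosh, Real.tanh_eq_sinh_div_cosh,
    div_le_div_iff₀ (Real.cosh_pos x) (Real.cosh_pos y)]
  have h1 : 0 ≤ Real.sinh (y - x) := by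
    exact Real.sinh_nonneg_iff.mpr (by linarith)
  rw [Real.sinh_sub] at h1
  nlinarith

/-- If `⟪ξ,ν⟫ ≤ 0` (i.e. `τ̂* ≥ 0`), then the smoothed look-ahead time is strictly
positive. -/
theorem tauHat_pos
    (ε k τbar : ℝ) (hε : 0 < ε) (hk : 0 < k) (hτ : 0 < τbar)
    (ξ ν : EuclideanSpace ℝ (Fin 2)) (hip : ⟪ξ, ν⟫ ≤ 0) :
    tauHat ε k τbar ξ ν > 0 := by
  set t := tauHatStar ε ξ ν with ht
  have ht0 : 0 ≤ t := by
    apply div_nonneg (by linarith) (by positivity)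
  have hK1 : 0 < Ksw k τbar t := by
    have := tanh_neg_one_lt (k * (t - τbar))
    unfold Ksw; linarith
  have hK01 : Ksw k τbar t ≤ Ksw k 0 t := by
    have := tanh_mono (show k * (t - τbar) ≤ k * (t - 0) by nlinarith)
    unfold Ksw; linarith
  have key : τbar * Ksw k τbar t ≤ tauHat ε k τbar ξ ν := by
    unfold tauHat
    rw [← ht]
    nlinarith [mul_le_mul_of_nonneg_left hK01 ht0]
  nlinarith
end
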